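/- Let T = conv{A₁,A₂,A₃} ⊂ ℝ² be a triangle with affinely independent vertices, let D be a point in the relative interior of e₁ = [A₂,A₃] and E a point in the relative interior of e₂ = [A₁,A₃], let K = conv{E,D,A₃}, let t be a unit vector parallel to D − E, n a unit vector orthogonal to t, and x_T a point of [D,E]. Suppose (φ₁,φ₂) ∈ RT × RT satisfies ⟨φ₁(x) − φ₂(x), n⟩ = 0 for every x on [D,E] and div φ₁ = div φ₂, and set μ = ⟨φ₁(x_T) − φ₂(x_T), t⟩. Then for s = 1,2: φ_s = Σᵢ Nᵢ(φ) λᵢ + μ·(ω_s − Πω), where ω₁ = t (the constant field), ω₂ = 0, and Πω = Σᵢ Nᵢ(ω) λᵢ. -/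

import Mathlib

open Real MeasureTheory RealInnerProductSpace

noncomputable section

abbrev V2 : Type := EuclideanSpace ℝ (Fin 2)

/-- The lowest-order Raviart–Thomas shape function with data `(c, b)`: `x ↦ c + b • x`
(its divergence is the constant `2 * b`). -/
def rt (c : V2) (b : ℝ) : V2 → V2 := fun x => c + b • x

/-- Arclength line integral of a scalar function over the segment `[P, Q]`. -/
def lineInt (f : V2 → ℝ) (P Q : V2) : ℝ :=
  (∫ s in (0:ℝ)..1, f (P + s • (Q - P))) * ‖Q - P‖

/-- First degree of freedom of the piecewise pair `(φ₁, φ₂)` (with `φ₁` on `K` and `φ₂` on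
`T∖K`): `N₁(φ) = (1/|e₁|)(∫_{[A₂,D]} φ₂·n₁ ds + ∫_{[D,A₃]} φ₁·n₁ ds)`. -/
def dof1 (A₂ A₃ D n₁ : V2) (c₁ : V2) (b₁ : ℝ) (c₂ : V2) (b₂ : ℝ) : ℝ :=
  (1 / ‖A₃ - A₂‖) *
    (lineInt (fun x => ⟪rt c₂ b₂ x, n₁⟫) A₂ D + lineInt (fun x => ⟪rt c₁ b₁ x, n₁⟫) D A₃)

/-- `N₂(φ) = (1/|e₂|)(∫_{[A₁,E]} φ₂·n₂ ds + ∫_{[E,A₃]} φ₁·n₂ ds)`. -/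
def dof2 (A₁ A₃ E n₂ : V2) (c₁ : V2) (b₁ : ℝ) (c₂ : V2) (b₂ : ℝ) : ℝ :=
  (1 / ‖A₃ - A₁‖) *
    (lineInt (fun x => ⟪rt c₂ b₂ x, n₂⟫) A₁ E + lineInt (fun x => ⟪rt c₁ b₁ x, n₂⟫) E A₃)

/-- `N₃(φ) = (1/|e₃|) ∫_{[A₁,A₂]} φ₂·n₃ ds`. -/
def dof3 (A₁ A₂ n₃ : V2) (c₂ : V2) (b₂ : ℝ) : ℝ :=
  (1 / ‖A₂ - A₁‖) * lineInt (fun x => ⟪rt c₂ b₂ x, n₃⟫) A₁ A₂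

/-- The IFE interface conditions for the pair `(φ₁, φ₂) = (rt c₁ b₁, rt c₂ b₂)`:
(i) `⟨φ₁(x) - φ₂(x), n⟩ = 0` on the segment `[D, E]`;
(ii) `β₁⟨φ₁(x_T), t⟩ = β₂⟨φ₂(x_T), t⟩`;
(iii) `div φ₁ = div φ₂`. -/
def ifeCond (D E xT t n : V2) (β₁ β₂ : ℝ) (c₁ : V2) (b₁ : ℝ) (c₂ : V2) (b₂ : ℝ) : Prop :=
  (∀ x ∈ segment ℝ D E, ⟪rt c₁ b₁ x - rt c₂ b₂ x, n⟫ = 0) ∧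
    β₁ * ⟪rt c₁ b₁ xT, t⟫ = β₂ * ⟪rt c₂ b₂ xT, t⟫ ∧
    2 * b₁ = 2 * b₂

/-- Area of the triangle `conv{A₁, A₂, A₃}`. -/
def triArea (A₁ A₂ A₃ : V2) : ℝ :=
  (volume (convexHull ℝ ({A₁, A₂, A₃} : Set V2))).toReal

/-- `λ₁(x) = (|e₁|/(2|T|))(x - A₁)`. -/
def lam1 (A₁ A₂ A₃ : V2) : V2 → V2 := fun x =>
  (‖A₃ - A₂‖ / (2 * triArea A₁ A₂ A₃)) • (x - A₁)

/-- `λ₂(x) = (|e₂|/(2|T|))(x - A₂)`. -/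
def lam2 (A₁ A₂ A₃ : V2) : V2 → V2 := fun x =>
  (‖A₃ - A₁‖ / (2 * triArea A₁ A₂ A₃)) • (x - A₂)

/-- `λ₃(x) = (|e₃|/(2|T|))(x - A₃)`. -/
def lam3 (A₁ A₂ A₃ : V2) : V2 → V2 := fun x =>
  (‖A₂ - A₁‖ / (2 * triArea A₁ A₂ A₃)) • (x - A₃)

/-- The Raviart–Thomas function `Σᵢ Nᵢ λᵢ` with prescribed degrees of freedom `N₁ N₂ N₃`. -/
def rtInterp (A₁ A₂ A₃ : V2) (N₁ N₂ N₃ : ℝ) : V2 → V2 := fun x =>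
  N₁ • lam1 A₁ A₂ A₃ x + N₂ • lam2 A₁ A₂ A₃ x + N₃ • lam3 A₁ A₂ A₃ x

/-- The Raviart–Thomas interpolant `Πω = Σᵢ Nᵢ(ω) λᵢ` of the piecewise field `ω` equal to
`t` on `K = conv{E, D, A₃}` and `0` on `T∖K`, where `N₁(ω) = (|DA₃|/|e₁|)⟨t, n₁⟩`,
`N₂(ω) = (|EA₃|/|e₂|)⟨t, n₂⟩` and `N₃(ω) = 0`. -/
def piOmega (A₁ A₂ A₃ D E t n₁ n₂ : V2) : V2 → V2 := fun x =>
  ((‖A₃ - D‖ / ‖A₃ - A₂‖) * ⟪t, n₁⟫) • lam1 A₁ A₂ A₃ x +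
    ((‖A₃ - E‖ / ‖A₃ - A₁‖) * ⟪t, n₂⟫) • lam2 A₁ A₂ A₃ x

open Pointwise

-- ===== Auxiliary lemmas =====

lemma inner_two (a b : V2) : ⟪a, b⟫ = a 0 * b 0 + a 1 * b 1 := by
  simp [PiLp.inner_apply, Fin.sum_univ_two, mul_comm]

lemma V2_ext (x y : V2) (h0 : x 0 = y 0) (h1 : x 1 = y 1) : x = y := by
  ext i; fin_cases i <;> assumption

lemma lineInt_rt (c m P Q : V2) (b : ℝ) :
    lineInt (fun x => ⟪rt c b x, m⟫) P Q
      = (⟪c, m⟫ + b * ⟪P, m⟫ + b * ⟪Q - P, m⟫ / 2) * ‖Q - P‖ := by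
  unfold lineInt rt
  congr 1
  have key : ∀ s : ℝ, ⟪c + b • (P + s • (Q - P)), m⟫
      = (⟪c, m⟫ + b * ⟪P, m⟫) + s * (b * ⟪Q - P, m⟫) := by
    intro s
    simp [inner_add_left, real_inner_smul_left]
    ring
  rw [intervalIntegral.integral_congr
    (g := fun s => (⟪c, m⟫ + b * ⟪P, m⟫) + s * (b * ⟪Q - P, m⟫)) (fun s _ => key s)]
  rw [intervalIntegral.integral_add (intervalIntegrable_const)
    ((intervalIntegral.intervalIntegrable_id).mul_const _)]
  simp [intervalIntegral.integral_mul_const, integral_id]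
  ring

lemma comp_ne_zero {w : V2} (hw : w ≠ 0) : ¬(w 0 = 0 ∧ w 1 = 0) := by
  rintro ⟨h0, h1⟩
  exact hw (by ext i; fin_cases i <;> simpa)

lemma perp_exists (m w : V2) (hm : ‖m‖ = 1) (hw : ¬(w 0 = 0 ∧ w 1 = 0)) (h : ⟪m, w⟫ = 0) :
    ∃ k : ℝ, m 0 = k * w 1 ∧ m 1 = -(k * w 0) ∧ k ^ 2 * (w 0 ^ 2 + w 1 ^ 2) = 1 := by
  have hq : w 0 ^ 2 + w 1 ^ 2 ≠ 0 := by
    intro hq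
    exact hw ⟨by nlinarith [sq_nonneg (w 0), sq_nonneg (w 1)],
      by nlinarith [sq_nonneg (w 0), sq_nonneg (w 1)]⟩
  have h' : m 0 * w 0 + m 1 * w 1 = 0 := by rw [← inner_two]; exact h
  have hm' : m 0 ^ 2 + m 1 ^ 2 = 1 := by
    have := real_inner_self_eq_norm_sq m
    rw [inner_two, hm] at this
    nlinarith [this]
  refine ⟨(m 0 * w 1 - m 1 * w 0) / (w 0 ^ 2 + w 1 ^ 2), ?_, ?_, ?_⟩
  · field_simp
    linear_combination (w 0) * h'
  · field_simp
    linear_combination (w 1) * h'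
  · rw [div_pow, div_mul_eq_mul_div, div_eq_one_iff_eq (pow_ne_zero 2 hq)]
    linear_combination (w 0 ^ 2 + w 1 ^ 2) ^ 2 * hm'
      - (w 0 ^ 2 + w 1 ^ 2) * (m 0 * w 0 + m 1 * w 1) * h'

lemma coeff_lemma (k nrm T d : ℝ) (h1 : k ^ 2 * nrm ^ 2 = 1) (hnrm : 0 ≤ nrm)
    (hkd : 0 < k * d) (hT : T = |d| / 2) : k * nrm / (2 * T) = 1 / d := by
  have hd : d ≠ 0 := by
    intro h; rw [h] at hkd; simp at hkd
  have hk : k ≠ 0 := by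
    intro h; rw [h] at hkd; simp at hkd
  have hs : (k * nrm) ^ 2 = 1 := by nlinarith [h1]
  have hcase : k * nrm = 1 ∨ k * nrm = -1 :=
    mul_self_eq_one_iff.mp (by nlinarith [hs] : (k * nrm) * (k * nrm) = 1)
  rcases lt_or_gt_of_ne hd with hneg | hpos
  · have habs : |d| = -d := abs_of_neg hneg
    have hkneg : k < 0 := by nlinarith [hkd]
    have : k * nrm = -1 := by
      rcases hcase with h | h
      · nlinarith [mul_nonneg (neg_nonneg.mpr hkneg.le) hnrm]
      · exact h
    rw [hT, habs, this]
    field_simp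
  · have habs : |d| = d := abs_of_pos hpos
    have hkpos : 0 < k := by nlinarith [hkd]
    have : k * nrm = 1 := by
      rcases hcase with h | h
      · exact h
      · nlinarith [mul_nonneg hkpos.le hnrm]
    rw [hT, habs, this]
    field_simp

lemma det_ne_zero (A₁ A₂ A₃ : V2) (hA : AffineIndependent ℝ ![A₁, A₂, A₃]) :
    (A₂ - A₁) 0 * (A₃ - A₁) 1 - (A₃ - A₁) 0 * (A₂ - A₁) 1 ≠ 0 := by
  intro hdet
  rw [affineIndependent_iff_not_collinear_set] at hA
  apply hA
  rw [collinear_iff_of_mem (Set.mem_insert A₁ _)]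
  simp only [PiLp.sub_apply] at hdet
  by_cases hv : A₃ - A₁ = 0
  · refine ⟨A₂ - A₁, fun p hp => ?_⟩
    have hA₃ : A₃ = A₁ := sub_eq_zero.mp hv
    rcases hp with h | h | h
    · exact ⟨0, by rw [h]; simp⟩
    · exact ⟨1, by rw [h]; simp [vadd_eq_add]⟩
    · exact ⟨0, by rw [h, hA₃]; simp⟩
  · refine ⟨A₃ - A₁, fun p hp => ?_⟩
    have hq : (A₃ 0 - A₁ 0) ^ 2 + (A₃ 1 - A₁ 1) ^ 2 ≠ 0 := by
      intro hq
      apply comp_ne_zero hv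
      simp only [PiLp.sub_apply]
      constructor <;> nlinarith [sq_nonneg (A₃ 0 - A₁ 0), sq_nonneg (A₃ 1 - A₁ 1)]
    rcases hp with h | h | h
    · exact ⟨0, by rw [h]; simp⟩
    · refine ⟨((A₂ 0 - A₁ 0) * (A₃ 0 - A₁ 0) + (A₂ 1 - A₁ 1) * (A₃ 1 - A₁ 1))
        / ((A₃ 0 - A₁ 0) ^ 2 + (A₃ 1 - A₁ 1) ^ 2), ?_⟩
      rw [h]
      have : A₂ = (((A₂ 0 - A₁ 0) * (A₃ 0 - A₁ 0) + (A₂ 1 - A₁ 1) * (A₃ 1 - A₁ 1))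
          / ((A₃ 0 - A₁ 0) ^ 2 + (A₃ 1 - A₁ 1) ^ 2)) • (A₃ - A₁) + A₁ := by
        ext i
        fin_cases i
        · simp only [PiLp.add_apply, PiLp.smul_apply, PiLp.sub_apply, smul_eq_mul, Fin.zero_eta, Fin.mk_one]
          field_simp
          linear_combination (A₃ 1 - A₁ 1) * hdet
        · simp only [PiLp.add_apply, PiLp.smul_apply, PiLp.sub_apply, smul_eq_mul, Fin.zero_eta, Fin.mk_one]
          field_simp
          linear_combination (-(A₃ 0 - A₁ 0)) * hdet
      rw [vadd_eq_add]; exact this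
    · exact ⟨1, by rw [h, vadd_eq_add]; simp⟩

def Lmap (u v : V2) : V2 →ₗ[ℝ] V2 where
  toFun x := x 0 • u + x 1 • v
  map_add' x y := by
    simp only [PiLp.add_apply, add_smul]
    abel
  map_smul' c x := by
    simp only [PiLp.smul_apply, smul_eq_mul, RingHom.id_apply, smul_add, smul_smul]

lemma Lmap_apply (u v x : V2) : Lmap u v x = x 0 • u + x 1 • v := rfl

lemma det_Lmap (u v : V2) : LinearMap.det (Lmap u v) = u 0 * v 1 - v 0 * u 1 := by
  rw [← LinearMap.det_toMatrix (EuclideanSpace.basisFun (Fin 2) ℝ).toBasis, Matrix.det_fin_two]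
  simp [LinearMap.toMatrix_apply, Lmap_apply, EuclideanSpace.basisFun_apply, EuclideanSpace.single_apply]

def stdTri : Set V2 := {x : V2 | 0 ≤ x 0 ∧ 0 ≤ x 1 ∧ x 0 + x 1 ≤ 1}

lemma vol_std_tri_prod :
    volume {p : ℝ × ℝ | 0 ≤ p.1 ∧ 0 ≤ p.2 ∧ p.1 + p.2 ≤ 1} = ENNReal.ofReal (1/2) := by
  have hm : MeasurableSet {p : ℝ × ℝ | 0 ≤ p.1 ∧ 0 ≤ p.2 ∧ p.1 + p.2 ≤ 1} := by
    apply MeasurableSet.inter (measurable_fst measurableSet_Ici)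
    apply MeasurableSet.inter (measurable_snd measurableSet_Ici)
    exact (measurable_fst.add measurable_snd) measurableSet_Iic
  rw [MeasureTheory.Measure.volume_eq_prod, Measure.prod_apply hm]
  have key : ∀ x : ℝ, volume (Prod.mk x ⁻¹' {p : ℝ × ℝ | 0 ≤ p.1 ∧ 0 ≤ p.2 ∧ p.1 + p.2 ≤ 1})
      = Set.indicator (Set.Icc (0:ℝ) 1) (fun x => ENNReal.ofReal (1 - x)) x := by
    intro x
    by_cases hx : x ∈ Set.Icc (0:ℝ) 1
    · have : Prod.mk x ⁻¹' {p : ℝ × ℝ | 0 ≤ p.1 ∧ 0 ≤ p.2 ∧ p.1 + p.2 ≤ 1}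
          = Set.Icc 0 (1 - x) := by
        ext y; simp only [Set.mem_preimage, Set.mem_setOf_eq, Set.mem_Icc]
        constructor
        · rintro ⟨-, h2, h3⟩; exact ⟨h2, by linarith⟩
        · rintro ⟨h2, h3⟩; exact ⟨hx.1, h2, by linarith⟩
      rw [this, Real.volume_Icc, Set.indicator_of_mem hx]
      ring_nf
    · have : Prod.mk x ⁻¹' {p : ℝ × ℝ | 0 ≤ p.1 ∧ 0 ≤ p.2 ∧ p.1 + p.2 ≤ 1} = ∅ := by
        ext y; simp only [Set.mem_preimage, Set.mem_setOf_eq, Set.mem_empty_iff_false, iff_false]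
        rintro ⟨h1, h2, h3⟩
        simp only [Set.mem_Icc, not_and_or, not_le] at hx
        rcases hx with h | h
        · linarith
        · linarith
      rw [this, Set.indicator_of_notMem hx, measure_empty]
  simp_rw [key]
  rw [lintegral_indicator measurableSet_Icc]
  rw [← ofReal_integral_eq_lintegral_ofReal]
  · rw [MeasureTheory.integral_Icc_eq_integral_Ioc, ← intervalIntegral.integral_of_le zero_le_one]
    congr 1
    rw [intervalIntegral.integral_sub intervalIntegrable_const intervalIntegral.intervalIntegrable_id]
    simp [integral_id]
    norm_num
  · exact (continuous_const.sub continuous_id).integrableOn_Icc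
  · filter_upwards [ae_restrict_mem measurableSet_Icc] with x hx
    simp only [Set.mem_Icc] at hx
    simp only [Pi.zero_apply]
    linarith

lemma vol_stdTri : volume stdTri = ENNReal.ofReal (1/2) := by
  have h := vol_std_tri_prod
  have hm : MeasurableSet {p : ℝ × ℝ | 0 ≤ p.1 ∧ 0 ≤ p.2 ∧ p.1 + p.2 ≤ 1} := by
    apply MeasurableSet.inter (measurable_fst measurableSet_Ici)
    apply MeasurableSet.inter (measurable_snd measurableSet_Ici)
    exact (measurable_fst.add measurable_snd) measurableSet_Iic
  have hmp : MeasurePreserving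
      ((MeasurableEquiv.finTwoArrow : (Fin 2 → ℝ) ≃ᵐ ℝ × ℝ) ∘ (MeasurableEquiv.toLp 2 (Fin 2 → ℝ)).symm)
      (volume : Measure V2) volume :=
    (volume_preserving_finTwoArrow ℝ).comp (EuclideanSpace.volume_preserving_symm_measurableEquiv_toLp (Fin 2))
  have hpre : stdTri = ((MeasurableEquiv.finTwoArrow : (Fin 2 → ℝ) ≃ᵐ ℝ × ℝ) ∘
      (MeasurableEquiv.toLp 2 (Fin 2 → ℝ)).symm) ⁻¹' {p : ℝ × ℝ | 0 ≤ p.1 ∧ 0 ≤ p.2 ∧ p.1 + p.2 ≤ 1} := by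
    ext x
    simp [stdTri, MeasurableEquiv.finTwoArrow, MeasurableEquiv.coe_toLp]
  rw [hpre, hmp.measure_preimage hm.nullMeasurableSet, h]

lemma convex_stdTri : Convex ℝ stdTri := by
  intro x hx y hy a b ha hb hab
  obtain ⟨hx0, hx1, hxs⟩ := hx
  obtain ⟨hy0, hy1, hys⟩ := hy
  refine ⟨?_, ?_, ?_⟩ <;>
    simp only [PiLp.add_apply, PiLp.smul_apply, smul_eq_mul]
  · positivity
  · positivity
  · nlinarith [mul_le_mul_of_nonneg_left hxs ha, mul_le_mul_of_nonneg_left hys hb]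

lemma stdTri_eq_hull :
    stdTri = convexHull ℝ {0, (EuclideanSpace.single 0 1 : V2), EuclideanSpace.single 1 1} := by
  apply le_antisymm
  · intro x hx
    obtain ⟨h0, h1, hs⟩ := hx
    rw [convexHull_insert (by simp), mem_convexJoin]
    rcases eq_or_lt_of_le (by linarith : (0:ℝ) ≤ x 0 + x 1) with hσ | hσ
    · refine ⟨0, rfl, EuclideanSpace.single 0 1, subset_convexHull ℝ _ (by simp), ?_⟩
      have hx0 : x 0 = 0 := by linarith
      have hx1 : x 1 = 0 := by linarith
      have : x = (0:V2) := by ext i; fin_cases i <;> simp [hx0, hx1]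
      rw [this]
      exact left_mem_segment ℝ _ _
    · set σ := x 0 + x 1 with hσdef
      refine ⟨0, rfl, (x 0 / σ) • EuclideanSpace.single 0 1 + (x 1 / σ) • EuclideanSpace.single 1 1, ?_, ?_⟩
      · rw [convexHull_pair]
        exact ⟨x 0 / σ, x 1 / σ, by positivity, by positivity, by field_simp; exact hσdef.symm, rfl⟩
      · refine ⟨1 - σ, σ, by linarith, by linarith, by ring, ?_⟩
        ext i
        fin_cases i <;>
          · simp [EuclideanSpace.single_apply, smul_smul]
            field_simp
  · apply convexHull_min _ convex_stdTri
    rintro p (rfl | rfl | rfl) <;> constructor <;> simp [EuclideanSpace.single_apply] <;> norm_num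

lemma triArea_eq (A₁ A₂ A₃ : V2) :
    triArea A₁ A₂ A₃ =
      |(A₂ - A₁) 0 * (A₃ - A₁) 1 - (A₃ - A₁) 0 * (A₂ - A₁) 1| / 2 := by
  have hst := stdTri_eq_hull
  have hv := vol_stdTri
  set u := A₂ - A₁
  set v := A₃ - A₁
  have himg : ({A₁, A₂, A₃} : Set V2) = (fun x => A₁ + Lmap u v x) '' {0, EuclideanSpace.single 0 1, EuclideanSpace.single 1 1} := by
    have h0 : Lmap u v 0 = 0 := by simp [Lmap]
    have h1 : Lmap u v (EuclideanSpace.single 0 1) = u := by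
      simp [Lmap_apply, EuclideanSpace.single_apply]
    have h2 : Lmap u v (EuclideanSpace.single 1 1) = v := by
      simp [Lmap_apply, EuclideanSpace.single_apply]
    simp only [Set.image_insert_eq, Set.image_singleton, h0, h1, h2]
    simp [u, v]
  have hcomp : (fun x => A₁ + Lmap u v x) '' (convexHull ℝ ({0, (EuclideanSpace.single 0 1 : V2), EuclideanSpace.single 1 1} : Set V2)) = convexHull ℝ ((fun x => A₁ + Lmap u v x) '' {0, EuclideanSpace.single 0 1, EuclideanSpace.single 1 1}) := by
    have h1 : (fun x => A₁ + Lmap u v x) = (fun y => A₁ + y) ∘ (Lmap u v) := rfl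
    rw [h1, Set.image_comp, (Lmap u v).image_convexHull, Set.image_comp]
    exact ((AffineEquiv.constVAdd ℝ V2 A₁).toAffineMap.image_convexHull _)
  have key : convexHull ℝ ({A₁, A₂, A₃} : Set V2) = (fun y => A₁ + y) '' ((Lmap u v) '' stdTri) := by
    rw [himg, ← hcomp, hst]
    exact (Set.image_image (fun y => A₁ + y) (Lmap u v) _).symm
  have hvadd : (fun y => A₁ + y) '' ((Lmap u v) '' stdTri) = A₁ +ᵥ ((Lmap u v) '' stdTri) := rfl
  rw [triArea, key, hvadd, measure_vadd, Measure.addHaar_image_linearMap, det_Lmap, hv]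
  rw [← ENNReal.ofReal_mul (abs_nonneg _)]
  rw [ENNReal.toReal_ofReal (by positivity)]
  ring


set_option maxHeartbeats 1000000 in
/-- The unnumbered decomposition Lemma of Section 4.1: if the pair `(φ₁, φ₂)` has zero
normal jump on `[D, E]` and equal divergences, and `μ = ⟨φ₁(x_T) - φ₂(x_T), t⟩`, then
`φ_s = Σᵢ Nᵢ(φ) λᵢ + μ (ω_s - Πω)` for `s = 1, 2`. -/
theorem stmt13 (A₁ A₂ A₃ D E t n xT n₁ n₂ n₃ : V2)
    (hA : AffineIndependent ℝ ![A₁, A₂, A₃])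
    (hD : D ∈ openSegment ℝ A₂ A₃) (hE : E ∈ openSegment ℝ A₁ A₃)
    (ht : ‖t‖ = 1) (htpar : ∃ c : ℝ, D - E = c • t)
    (hn : ‖n‖ = 1) (hnt : ⟪n, t⟫ = 0)
    (hxT : xT ∈ segment ℝ D E)
    (hn₁ : ‖n₁‖ = 1) (hn₁e : ⟪n₁, A₃ - A₂⟫ = 0) (hn₁o : ⟪n₁, A₁ - A₂⟫ < 0)
    (hn₂ : ‖n₂‖ = 1) (hn₂e : ⟪n₂, A₃ - A₁⟫ = 0) (hn₂o : ⟪n₂, A₂ - A₁⟫ < 0)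
    (hn₃ : ‖n₃‖ = 1) (hn₃e : ⟪n₃, A₂ - A₁⟫ = 0) (hn₃o : ⟪n₃, A₃ - A₁⟫ < 0)
    (c₁ c₂ : V2) (b₁ b₂ : ℝ)
    (hjumpn : ∀ x ∈ segment ℝ D E, ⟪rt c₁ b₁ x - rt c₂ b₂ x, n⟫ = 0)
    (hdiv : 2 * b₁ = 2 * b₂) :
    (∀ x, rt c₁ b₁ x =
        rtInterp A₁ A₂ A₃ (dof1 A₂ A₃ D n₁ c₁ b₁ c₂ b₂) (dof2 A₁ A₃ E n₂ c₁ b₁ c₂ b₂)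
            (dof3 A₁ A₂ n₃ c₂ b₂) x +
          ⟪rt c₁ b₁ xT - rt c₂ b₂ xT, t⟫ • (t - piOmega A₁ A₂ A₃ D E t n₁ n₂ x)) ∧
      ∀ x, rt c₂ b₂ x =
        rtInterp A₁ A₂ A₃ (dof1 A₂ A₃ D n₁ c₁ b₁ c₂ b₂) (dof2 A₁ A₃ E n₂ c₁ b₁ c₂ b₂)
            (dof3 A₁ A₂ n₃ c₂ b₂) x +
          ⟪rt c₁ b₁ xT - rt c₂ b₂ xT, t⟫ • (0 - piOmega A₁ A₂ A₃ D E t n₁ n₂ x) := by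
  
  have hb : b₁ = b₂ := by linarith
  subst hb
  generalize hμdef : ⟪rt c₁ b₁ xT - rt c₂ b₁ xT, t⟫ = μ
  have hrtd : ∀ y : V2, rt c₁ b₁ y - rt c₂ b₁ y = c₁ - c₂ := by
    intro y; simp only [rt]; abel
  have hμ : μ = ⟪c₁ - c₂, t⟫ := by rw [← hμdef, hrtd]
  have ht2 : t 0 ^ 2 + t 1 ^ 2 = 1 := by
    have h := real_inner_self_eq_norm_sq t
    rw [inner_two, ht] at h
    nlinarith [h]
  have htne : t ≠ 0 := by intro h; rw [h] at ht; simp at ht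
  obtain ⟨kt, hkt0, hkt1, hktn⟩ := perp_exists n t hn (comp_ne_zero htne) hnt
  have hktne : kt ≠ 0 := by intro h; rw [h] at hktn; simp at hktn
  have hdn : ⟪c₁ - c₂, n⟫ = 0 := by
    have h := hjumpn D (left_mem_segment ℝ D E)
    rwa [hrtd D] at h
  have hdt' : (c₁ 0 - c₂ 0) * t 1 - (c₁ 1 - c₂ 1) * t 0 = 0 := by
    rw [inner_two, hkt0, hkt1] at hdn
    simp only [PiLp.sub_apply] at hdn
    have h3 := mul_eq_zero.mp
      (show kt * ((c₁ 0 - c₂ 0) * t 1 - (c₁ 1 - c₂ 1) * t 0) = 0 by linear_combination hdn)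
    rcases h3 with h | h
    · exact absurd h hktne
    · exact h
  have hct : c₁ = c₂ + μ • t := by
    rw [hμ, inner_two]
    refine V2_ext _ _ ?_ ?_
    · simp only [PiLp.add_apply, PiLp.smul_apply, PiLp.sub_apply, smul_eq_mul]
      linear_combination -(c₁ 0 - c₂ 0) * ht2 + t 1 * hdt'
    · simp only [PiLp.add_apply, PiLp.smul_apply, PiLp.sub_apply, smul_eq_mul]
      linear_combination -(c₁ 1 - c₂ 1) * ht2 - t 0 * hdt'
  -- vertices distinct
  have h23 : A₂ ≠ A₃ := fun h =>
    absurd (hA.injective (show ![A₁, A₂, A₃] 1 = ![A₁, A₂, A₃] 2 by simpa using h)) (by decide)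
  have h13 : A₁ ≠ A₃ := fun h =>
    absurd (hA.injective (show ![A₁, A₂, A₃] 0 = ![A₁, A₂, A₃] 2 by simpa using h)) (by decide)
  have h12 : A₁ ≠ A₂ := fun h =>
    absurd (hA.injective (show ![A₁, A₂, A₃] 0 = ![A₁, A₂, A₃] 1 by simpa using h)) (by decide)
  have hw₁v : (A₃ - A₂) ≠ 0 := sub_ne_zero.mpr (Ne.symm h23)
  have hw₂v : (A₃ - A₁) ≠ 0 := sub_ne_zero.mpr (Ne.symm h13)
  have hw₃v : (A₂ - A₁) ≠ 0 := sub_ne_zero.mpr (Ne.symm h12)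
  have hw₁ : ‖A₃ - A₂‖ ≠ 0 := norm_ne_zero_iff.mpr hw₁v
  have hw₂ : ‖A₃ - A₁‖ ≠ 0 := norm_ne_zero_iff.mpr hw₂v
  have hw₃ : ‖A₂ - A₁‖ ≠ 0 := norm_ne_zero_iff.mpr hw₃v
  -- segment parameters
  obtain ⟨aD, bD, haD, hbD, habD, hDdef⟩ := hD
  have haD' : aD = 1 - bD := by linarith
  subst haD'
  obtain ⟨aE, bE, haE, hbE, habE, hEdef⟩ := hE
  have haE' : aE = 1 - bE := by linarith
  subst haE'
  have hnD1 : ‖D - A₂‖ = bD * ‖A₃ - A₂‖ := by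
    have h : D - A₂ = bD • (A₃ - A₂) := by rw [← hDdef]; module
    rw [h, norm_smul, Real.norm_eq_abs, abs_of_pos hbD]
  have hnD2 : ‖A₃ - D‖ = (1 - bD) * ‖A₃ - A₂‖ := by
    have h : A₃ - D = (1 - bD) • (A₃ - A₂) := by rw [← hDdef]; module
    rw [h, norm_smul, Real.norm_eq_abs, abs_of_pos (by linarith : (0:ℝ) < 1 - bD)]
  have hnE1 : ‖E - A₁‖ = bE * ‖A₃ - A₁‖ := by
    have h : E - A₁ = bE • (A₃ - A₁) := by rw [← hEdef]; module
    rw [h, norm_smul, Real.norm_eq_abs, abs_of_pos hbE]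
  have hnE2 : ‖A₃ - E‖ = (1 - bE) * ‖A₃ - A₁‖ := by
    have h : A₃ - E = (1 - bE) • (A₃ - A₁) := by rw [← hEdef]; module
    rw [h, norm_smul, Real.norm_eq_abs, abs_of_pos (by linarith : (0:ℝ) < 1 - bE)]
  have hratio1 : ‖A₃ - D‖ / ‖A₃ - A₂‖ = 1 - bD := by rw [hnD2]; field_simp
  have hratio2 : ‖A₃ - E‖ / ‖A₃ - A₁‖ = 1 - bE := by rw [hnE2]; field_simp
  -- dof computations
  have hdof1 : dof1 A₂ A₃ D n₁ c₁ b₁ c₂ b₁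
      = ⟪rt c₂ b₁ ((1/2 : ℝ) • (A₂ + A₃)), n₁⟫ + μ * ((1 - bD) * ⟪t, n₁⟫) := by
    unfold dof1
    rw [lineInt_rt, lineInt_rt, hnD1, hnD2, hct, ← hDdef]
    simp only [rt, inner_add_left, inner_sub_left, real_inner_smul_left]
    field_simp
    ring
  have hdof2 : dof2 A₁ A₃ E n₂ c₁ b₁ c₂ b₁
      = ⟪rt c₂ b₁ ((1/2 : ℝ) • (A₁ + A₃)), n₂⟫ + μ * ((1 - bE) * ⟪t, n₂⟫) := by
    unfold dof2
    rw [lineInt_rt, lineInt_rt, hnE1, hnE2, hct, ← hEdef]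
    simp only [rt, inner_add_left, inner_sub_left, real_inner_smul_left]
    field_simp
    ring
  have hdof3 : dof3 A₁ A₂ n₃ c₂ b₁ = ⟪rt c₂ b₁ ((1/2 : ℝ) • (A₁ + A₂)), n₃⟫ := by
    unfold dof3
    rw [lineInt_rt]
    simp only [rt, inner_add_left, inner_sub_left, real_inner_smul_left]
    field_simp
    ring
  -- determinant and normals
  set dt := (A₂ - A₁) 0 * (A₃ - A₁) 1 - (A₃ - A₁) 0 * (A₂ - A₁) 1 with hdtdef
  have hdt : dt ≠ 0 := det_ne_zero A₁ A₂ A₃ hA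
  have harea : triArea A₁ A₂ A₃ = |dt| / 2 := triArea_eq A₁ A₂ A₃
  have hdtc : dt = (A₂ 0 - A₁ 0) * (A₃ 1 - A₁ 1) - (A₃ 0 - A₁ 0) * (A₂ 1 - A₁ 1) := by
    rw [hdtdef]; simp [PiLp.sub_apply]
  have hdtc' : (A₂ 0 - A₁ 0) * (A₃ 1 - A₁ 1) - (A₃ 0 - A₁ 0) * (A₂ 1 - A₁ 1) ≠ 0 := by
    rw [← hdtc]; exact hdt
  obtain ⟨k₁, h₁0, h₁1, h₁n⟩ := perp_exists n₁ (A₃ - A₂) hn₁ (comp_ne_zero hw₁v) hn₁e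
  obtain ⟨k₂, h₂0, h₂1, h₂n⟩ := perp_exists n₂ (A₃ - A₁) hn₂ (comp_ne_zero hw₂v) hn₂e
  obtain ⟨k₃, h₃0, h₃1, h₃n⟩ := perp_exists n₃ (A₂ - A₁) hn₃ (comp_ne_zero hw₃v) hn₃e
  have hs₁ : 0 < k₁ * dt := by
    have heq : ⟪n₁, A₁ - A₂⟫
        = -(k₁ * ((A₂ 0 - A₁ 0) * (A₃ 1 - A₁ 1) - (A₃ 0 - A₁ 0) * (A₂ 1 - A₁ 1))) := by
      rw [inner_two, h₁0, h₁1]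
      simp only [PiLp.sub_apply]
      ring
    rw [hdtc]
    linarith [hn₁o, heq]
  have hs₂ : 0 < k₂ * (-dt) := by
    have heq : ⟪n₂, A₂ - A₁⟫
        = k₂ * ((A₂ 0 - A₁ 0) * (A₃ 1 - A₁ 1) - (A₃ 0 - A₁ 0) * (A₂ 1 - A₁ 1)) := by
      rw [inner_two, h₂0, h₂1]
      simp only [PiLp.sub_apply]
      ring
    rw [hdtc]
    linarith [hn₂o, heq]
  have hs₃ : 0 < k₃ * dt := by
    have heq : ⟪n₃, A₃ - A₁⟫
        = -(k₃ * ((A₂ 0 - A₁ 0) * (A₃ 1 - A₁ 1) - (A₃ 0 - A₁ 0) * (A₂ 1 - A₁ 1))) := by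
      rw [inner_two, h₃0, h₃1]
      simp only [PiLp.sub_apply]
      ring
    rw [hdtc]
    linarith [hn₃o, heq]
  have hnw₁ : ‖A₃ - A₂‖ ^ 2 = (A₃ - A₂) 0 ^ 2 + (A₃ - A₂) 1 ^ 2 := by
    rw [← real_inner_self_eq_norm_sq, inner_two]; ring
  have hnw₂ : ‖A₃ - A₁‖ ^ 2 = (A₃ - A₁) 0 ^ 2 + (A₃ - A₁) 1 ^ 2 := by
    rw [← real_inner_self_eq_norm_sq, inner_two]; ring
  have hnw₃ : ‖A₂ - A₁‖ ^ 2 = (A₂ - A₁) 0 ^ 2 + (A₂ - A₁) 1 ^ 2 := by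
    rw [← real_inner_self_eq_norm_sq, inner_two]; ring
  have hC₁ : k₁ * ‖A₃ - A₂‖ / (2 * triArea A₁ A₂ A₃) = 1 / dt :=
    coeff_lemma k₁ _ _ dt (by rw [hnw₁]; exact h₁n) (norm_nonneg _) hs₁ harea
  have hC₂ : k₂ * ‖A₃ - A₁‖ / (2 * triArea A₁ A₂ A₃) = 1 / (-dt) :=
    coeff_lemma k₂ _ _ (-dt) (by rw [hnw₂]; exact h₂n) (norm_nonneg _) hs₂
      (by rw [abs_neg]; exact harea)
  have hC₃ : k₃ * ‖A₂ - A₁‖ / (2 * triArea A₁ A₂ A₃) = 1 / dt :=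
    coeff_lemma k₃ _ _ dt (by rw [hnw₃]; exact h₃n) (norm_nonneg _) hs₃ harea
  have hin₁ : ∀ y : V2, ⟪y, n₁⟫ = k₁ * (y 0 * (A₃ - A₂) 1 - y 1 * (A₃ - A₂) 0) := by
    intro y; rw [inner_two, h₁0, h₁1]; ring
  have hin₂ : ∀ y : V2, ⟪y, n₂⟫ = k₂ * (y 0 * (A₃ - A₁) 1 - y 1 * (A₃ - A₁) 0) := by
    intro y; rw [inner_two, h₂0, h₂1]; ring
  have hin₃ : ∀ y : V2, ⟪y, n₃⟫ = k₃ * (y 0 * (A₂ - A₁) 1 - y 1 * (A₂ - A₁) 0) := by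
    intro y; rw [inner_two, h₃0, h₃1]; ring
  have hC₁' : dt * (k₁ * ‖A₃ - A₂‖ / (2 * triArea A₁ A₂ A₃)) = 1 := by
    rw [hC₁]; field_simp
  have hC₂' : dt * (k₂ * ‖A₃ - A₁‖ / (2 * triArea A₁ A₂ A₃)) = -1 := by
    rw [hC₂]; field_simp
  have hC₃' : dt * (k₃ * ‖A₂ - A₁‖ / (2 * triArea A₁ A₂ A₃)) = 1 := by
    rw [hC₃]; field_simp
  have hlam1 : ∀ (y x : V2), dt • (⟪y, n₁⟫ • lam1 A₁ A₂ A₃ x)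
      = (y 0 * (A₃ - A₂) 1 - y 1 * (A₃ - A₂) 0) • (x - A₁) := by
    intro y x
    simp only [lam1]
    rw [hin₁ y, smul_smul, smul_smul]
    congr 1
    linear_combination (y 0 * (A₃ - A₂) 1 - y 1 * (A₃ - A₂) 0) * hC₁'
  have hlam2 : ∀ (y x : V2), dt • (⟪y, n₂⟫ • lam2 A₁ A₂ A₃ x)
      = (-(y 0 * (A₃ - A₁) 1 - y 1 * (A₃ - A₁) 0)) • (x - A₂) := by
    intro y x
    simp only [lam2]
    rw [hin₂ y, smul_smul, smul_smul]
    congr 1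
    linear_combination (y 0 * (A₃ - A₁) 1 - y 1 * (A₃ - A₁) 0) * hC₂'
  have hlam3 : ∀ (y x : V2), dt • (⟪y, n₃⟫ • lam3 A₁ A₂ A₃ x)
      = (y 0 * (A₂ - A₁) 1 - y 1 * (A₂ - A₁) 0) • (x - A₃) := by
    intro y x
    simp only [lam3]
    rw [hin₃ y, smul_smul, smul_smul]
    congr 1
    linear_combination (y 0 * (A₂ - A₁) 1 - y 1 * (A₂ - A₁) 0) * hC₃'
  have hmain : ∀ x, ⟪rt c₂ b₁ ((1/2 : ℝ) • (A₂ + A₃)), n₁⟫ • lam1 A₁ A₂ A₃ x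
      + ⟪rt c₂ b₁ ((1/2 : ℝ) • (A₁ + A₃)), n₂⟫ • lam2 A₁ A₂ A₃ x
      + ⟪rt c₂ b₁ ((1/2 : ℝ) • (A₁ + A₂)), n₃⟫ • lam3 A₁ A₂ A₃ x = rt c₂ b₁ x := by
    intro x
    apply smul_right_injective V2 hdt
    simp only [smul_add, hlam1, hlam2, hlam3]
    refine V2_ext _ _ ?_ ?_ <;>
    · simp only [rt, PiLp.add_apply, PiLp.smul_apply, PiLp.sub_apply, smul_eq_mul, hdtc]
      ring
  have h2 : ∀ x, rt c₂ b₁ x =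
      rtInterp A₁ A₂ A₃ (dof1 A₂ A₃ D n₁ c₁ b₁ c₂ b₁) (dof2 A₁ A₃ E n₂ c₁ b₁ c₂ b₁)
          (dof3 A₁ A₂ n₃ c₂ b₁) x +
        μ • (0 - piOmega A₁ A₂ A₃ D E t n₁ n₂ x) := by
    intro x
    simp only [rtInterp, piOmega]
    rw [hdof1, hdof2, hdof3, hratio1, hratio2, ← hmain x]
    module
  refine ⟨fun x => ?_, h2⟩
  have h := h2 x
  calc rt c₁ b₁ x = rt c₂ b₁ x + μ • t := by
        simp only [rt]; rw [hct]; module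
    _ = (rtInterp A₁ A₂ A₃ (dof1 A₂ A₃ D n₁ c₁ b₁ c₂ b₁) (dof2 A₁ A₃ E n₂ c₁ b₁ c₂ b₁)
          (dof3 A₁ A₂ n₃ c₂ b₁) x + μ • (0 - piOmega A₁ A₂ A₃ D E t n₁ n₂ x)) + μ • t := by
        rw [← h]
    _ = rtInterp A₁ A₂ A₃ (dof1 A₂ A₃ D n₁ c₁ b₁ c₂ b₁) (dof2 A₁ A₃ E n₂ c₁ b₁ c₂ b₁)
          (dof3 A₁ A₂ n₃ c₂ b₁) x + μ • (t - piOmega A₁ A₂ A₃ D E t n₁ n₂ x) := by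
        module
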